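/- The polynomial F(x₀,...,xₙ) defined as the coefficient of x^{−κ−1} in the expansion of ∏_{j=0}^{n}(1−x_j/x)^{λ_j} satisfies the Euler-Poisson-Darboux-type equations ∂ᵢ∂ⱼF = (λᵢ∂ⱼF − λⱼ∂ᵢF)/(xᵢ−xⱼ) for all i ≠ j, identically as polynomials (the right-hand side being polynomial since λᵢ∂ⱼF − λⱼ∂ᵢF vanishes on xᵢ = xⱼ). -/

import Mathlib

open MvPolynomial Finset

theorem pderiv_comm_aux {σ R : Type*} [CommRing R] [DecidableEq σ]
    (i j : σ) (f : MvPolynomial σ R) :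
    pderiv i (pderiv j f) = pderiv j (pderiv i f) := by
  induction f using MvPolynomial.induction_on' with
  | monomial u a =>
    rcases eq_or_ne i j with rfl | hij
    · rfl
    · simp only [pderiv_monomial]
      rw [tsub_tsub, tsub_tsub, add_comm (Finsupp.single j 1)]
      congr 1
      simp [Finsupp.tsub_apply, Finsupp.single_apply, hij, hij.symm]
      ring
  | add p q hp hq => simp [hp, hq]

section
variable {K : Type*} [Field K] [CharZero K] {n : ℕ} (lam : Fin (n + 1) → K)
    (p : ℕ → MvPolynomial (Fin (n + 1)) K)
    (hp : ∀ s, p s = ∑ i, C (lam i) * X i ^ s)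
    (h : ℕ → MvPolynomial (Fin (n + 1)) K) (h0 : h 0 = 1)
    (hrec : ∀ m : ℕ, ((m : K) + 1) • h (m + 1) = -∑ s ∈ range (m + 1), p (s + 1) * h (m - s))
    (i : Fin (n + 1))

include hp in
theorem pderiv_p (s : ℕ) :
    pderiv i (p (s + 1)) = C (((s : K) + 1) * lam i) * X i ^ s := by
  rw [hp, map_sum]
  rw [Finset.sum_eq_single i]
  · rw [pderiv_C_mul, pderiv_pow, pderiv_X_self,
      ← map_natCast (C : K →+* MvPolynomial (Fin (n + 1)) K) (s + 1)]
    rw [show s + 1 - 1 = s from rfl, mul_one, ← mul_assoc, ← C_mul]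
    push_cast
    ring_nf
  · intro k _ hk
    rw [pderiv_C_mul, pderiv_pow, pderiv_X_of_ne hk]
    ring
  · simp

theorem swap_tri {M : Type*} [AddCommMonoid M] (m : ℕ) (f : ℕ → ℕ → M) :
    ∑ s ∈ range (m + 1), ∑ t ∈ range (m - s), f s t
      = ∑ t ∈ range m, ∑ s ∈ range (m - t), f s t := by
  rw [Finset.sum_range_succ]
  simp only [Nat.sub_self, range_zero, sum_empty, add_zero]
  exact Finset.sum_comm' (by intro x y; simp only [mem_range]; omega)

include hp h0 hrec in
theorem keyB :
    ∀ m, pderiv i (h m) = -C (lam i) * ∑ t ∈ range m, X i ^ t * h (m - 1 - t) := by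
  intro m
  induction m using Nat.strong_induction_on with
  | _ m IH =>
    rcases m with _ | m
    · simp [h0]
    · have hc : ((m : K) + 1) ≠ 0 := Nat.cast_add_one_ne_zero m
      have hC : (C ((m : K) + 1) : MvPolynomial (Fin (n + 1)) K) ≠ 0 := by
        rw [Ne, C_eq_zero]; exact hc
      have key := congrArg (pderiv i) (hrec m)
      rw [smul_eq_C_mul, pderiv_C_mul] at key
      apply mul_left_cancel₀ hC
      rw [key, map_neg, map_sum]
      have expand : ∀ s ∈ range (m + 1), pderiv i (p (s + 1) * h (m - s))
          = C (((s : K) + 1) * lam i) * (X i ^ s * h (m - s))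
            + p (s + 1) * (-C (lam i) * ∑ t ∈ range (m - s), X i ^ t * h (m - s - 1 - t)) := by
        intro s hs
        rw [pderiv_mul, pderiv_p lam p hp i s, IH (m - s) (by omega)]
        ring
      rw [Finset.sum_congr rfl expand, Finset.sum_add_distrib]
      have dbl : ∑ s ∈ range (m + 1),
            p (s + 1) * (-C (lam i) * ∑ t ∈ range (m - s), X i ^ t * h (m - s - 1 - t))
          = C (lam i) * ∑ t ∈ range (m + 1), C ((m : K) - (t : K)) * (X i ^ t * h (m - t)) := by
        have e1 : ∀ s ∈ range (m + 1),
            p (s + 1) * (-C (lam i) * ∑ t ∈ range (m - s), X i ^ t * h (m - s - 1 - t))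
              = -C (lam i) * ∑ t ∈ range (m - s),
                  p (s + 1) * (X i ^ t * h (m - s - 1 - t)) := by
          intro s hs
          rw [Finset.mul_sum, Finset.mul_sum, Finset.mul_sum]
          exact Finset.sum_congr rfl fun t ht => by ring
        rw [Finset.sum_congr rfl e1, ← Finset.mul_sum,
          swap_tri m (fun s t => p (s + 1) * (X i ^ t * h (m - s - 1 - t)))]
        have e2 : ∀ t ∈ range m, ∑ s ∈ range (m - t), p (s + 1) * (X i ^ t * h (m - s - 1 - t))
            = -(C ((m : K) - (t : K)) * (X i ^ t * h (m - t))) := by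
          intro t ht
          rw [mem_range] at ht
          have e3 : ∀ s ∈ range (m - t), p (s + 1) * (X i ^ t * h (m - s - 1 - t))
              = X i ^ t * (p (s + 1) * h (m - 1 - t - s)) := by
            intro s hs
            rw [show m - s - 1 - t = m - 1 - t - s from by omega]
            ring
          rw [Finset.sum_congr rfl e3, ← Finset.mul_sum]
          have hr := hrec (m - 1 - t)
          rw [show m - 1 - t + 1 = m - t from by omega] at hr
          have hcast : ((m - 1 - t : ℕ) : K) + 1 = (m : K) - (t : K) := by
            rw [show m - 1 - t = m - (t + 1) from by omega,
              Nat.cast_sub (by omega : t + 1 ≤ m)]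
            push_cast
            ring
          rw [hcast, smul_eq_C_mul] at hr
          -- hr : C ((m:K) - t) * h (m - t) = -∑ s ∈ range (m - t), p (s+1) * h (m - 1 - t - s)
          rw [show (∑ s ∈ range (m - t), p (s + 1) * h (m - 1 - t - s))
              = -(C ((m : K) - (t : K)) * h (m - t)) from by rw [hr, neg_neg]]
          ring
        rw [Finset.sum_congr rfl e2, Finset.sum_neg_distrib, Finset.sum_range_succ]
        simp only [sub_self, map_zero, zero_mul, add_zero]
        ring
      simp only [Nat.add_sub_cancel]
      rw [dbl, Finset.mul_sum, Finset.mul_sum, Finset.mul_sum, ← Finset.sum_add_distrib,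
        ← Finset.sum_neg_distrib]
      refine Finset.sum_congr rfl fun t ht => ?_
      rw [mem_range, Nat.lt_succ_iff] at ht
      simp only [neg_mul, mul_neg, ← smul_eq_C_mul, smul_smul]
      rw [← add_smul, ← neg_smul, ← neg_smul]
      congr 1
      ring
end

section
variable {K : Type*} [Field K] [CharZero K] {n : ℕ} (lam : Fin (n + 1) → K)
    (p : ℕ → MvPolynomial (Fin (n + 1)) K)
    (hp : ∀ s, p s = ∑ i, C (lam i) * X i ^ s)
    (h : ℕ → MvPolynomial (Fin (n + 1)) K) (h0 : h 0 = 1)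
    (hrec : ∀ m : ℕ, ((m : K) + 1) • h (m + 1) = -∑ s ∈ range (m + 1), p (s + 1) * h (m - s))
    (i : Fin (n + 1))

include hp h0 hrec in
theorem keyA (m : ℕ) :
    pderiv i (h (m + 1)) = X i * pderiv i (h m) - C (lam i) * h m := by
  rw [keyB lam p hp h h0 hrec i (m + 1), keyB lam p hp h h0 hrec i m,
    Finset.sum_range_succ']
  simp only [Nat.add_sub_cancel, pow_zero, one_mul, Nat.sub_zero]
  have e : ∀ t ∈ range m, X i ^ (t + 1) * h (m - (t + 1))
      = X i * (X i ^ t * h (m - 1 - t)) := by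
    intro t ht
    rw [show m - (t + 1) = m - 1 - t from by omega]
    ring
  rw [Finset.sum_congr rfl e, ← Finset.mul_sum]
  ring
end

open MvPolynomial Finset in
/-- The residue-at-infinity polynomial `F = [x^{−κ−1}] ∏ⱼ(1−xⱼ/x)^{λⱼ}` satisfies the
Euler–Poisson–Darboux equations `(xᵢ−xⱼ) ∂ᵢ∂ⱼF = λᵢ∂ⱼF − λⱼ∂ᵢF` for all `i ≠ j`. -/
theorem stmt_13 (K : Type*) [Field K] [CharZero K] (n κ : ℕ) (lam : Fin (n + 1) → K)
    (p : ℕ → MvPolynomial (Fin (n + 1)) K)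
    (hp : ∀ s, p s = ∑ i, C (lam i) * X i ^ s)
    (h : ℕ → MvPolynomial (Fin (n + 1)) K) (h0 : h 0 = 1)
    (hrec : ∀ m : ℕ, ((m : K) + 1) • h (m + 1) = -∑ s ∈ range (m + 1), p (s + 1) * h (m - s))
    (F : MvPolynomial (Fin (n + 1)) K) (hF : F = h (κ + 1)) :
    ∀ i j : Fin (n + 1), i ≠ j →
      (X i - X j) * pderiv i (pderiv j F)
        = C (lam i) * pderiv j F - C (lam j) * pderiv i F := by
  subst hF
  intro i j hij
  have E1 := congrArg (pderiv i) (keyA lam p hp h h0 hrec j (κ + 1))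
  have E2 := congrArg (pderiv j) (keyA lam p hp h h0 hrec i (κ + 1))
  rw [map_sub, pderiv_mul, pderiv_X_of_ne (Ne.symm hij), pderiv_C_mul, zero_mul, zero_add] at E1
  rw [map_sub, pderiv_mul, pderiv_X_of_ne hij, pderiv_C_mul, zero_mul, zero_add] at E2
  have C12 := pderiv_comm_aux i j (h (κ + 1 + 1))
  have C11 := pderiv_comm_aux i j (h (κ + 1))
  linear_combination E1 - E2 - C12 + X i * C11
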